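/- Suppose S ⊆ {−1,0,1}^I is a finite set of vectors that is not totally unimodular. Then there exist linearly independent vectors s^1,...,s^{|I|} ∈ S ∪ {e_i : i ∈ I}, and vectors d, d' ∈ S \ {s^1,...,s^{|I|}}, such that letting G be the |I|×|I| matrix whose columns are s^1,...,s^{|I|} (which is invertible), there exist indices k, ℓ with (G⁻¹d)_k · (G⁻¹d)_ℓ > 0 and (G⁻¹d')_k · (G⁻¹d')_ℓ < 0. -/

import Mathlib

set_option maxHeartbeats 1000000

open Matrix

private lemma Tmul {R : Type*} [Ring R] {x y : R}
    (hx : x ∈ ({-1, 0, 1} : Set R)) (hy : y ∈ ({-1, 0, 1} : Set R)) :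
    x * y ∈ ({-1, 0, 1} : Set R) := by
  simp only [Set.mem_insert_iff, Set.mem_singleton_iff] at *
  rcases hx with rfl | rfl | rfl <;> rcases hy with rfl | rfl | rfl <;> norm_num

private lemma pivot_det {j : ℕ} (N : Matrix (Fin (j + 1)) (Fin (j + 1)) ℚ)
    (hp : N 0 0 ≠ 0) :
    N.det = N 0 0 * (Matrix.of fun s t : Fin j =>
      N s.succ t.succ - N 0 t.succ / N 0 0 * N s.succ 0).det := by
  set c : Fin (j+1) → ℚ := fun t => if t = 0 then 0 else -(N 0 t / N 0 0) with hc
  set N' : Matrix (Fin (j+1)) (Fin (j+1)) ℚ :=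
    Matrix.of (fun s t => N s t + c t * N s 0) with hN'
  have hdet : N'.det = N.det := by
    have h := Matrix.det_eq_of_forall_row_eq_smul_add_const (A := N'.transpose)
      (B := N.transpose) c 0 (by simp [hc]) ?_
    · rw [← Matrix.det_transpose N', h, Matrix.det_transpose]
    · intro i j'
      simp [hN', Matrix.transpose_apply]
  have hrow0 : ∀ t, N' 0 t = if t = 0 then N 0 0 else 0 := by
    intro t
    by_cases ht : t = 0
    · simp [hN', hc, ht]
    · simp only [hN', hc, Matrix.of_apply, if_neg ht]
      field_simp
      ring
  rw [← hdet, Matrix.det_succ_row_zero]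
  rw [Finset.sum_eq_single 0]
  · have h00 : N' 0 0 = N 0 0 := by simp [hrow0]
    rw [h00]
    simp only [Fin.val_zero, pow_zero, one_mul]
    congr 2
    ext s t
    simp only [Matrix.submatrix_apply, Matrix.of_apply, Fin.zero_succAbove, hN', hc,
      if_neg (Fin.succ_ne_zero t)]
    ring
  · intro b _ hb
    rw [hrow0 b, if_neg hb]
    ring
  · intro h; exact absurd (Finset.mem_univ _) h

private lemma Tneg {R : Type*} [Ring R] {x : R} (h : -x ∈ ({-1, 0, 1} : Set R)) :
    x ∈ ({-1, 0, 1} : Set R) := by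
  have := Tmul (show (-1 : R) ∈ ({-1, 0, 1} : Set R) from Set.mem_insert _ _) h
  simpa using this

private lemma Tneg' {R : Type*} [Ring R] {x : R} (h : x ∈ ({-1, 0, 1} : Set R)) :
    -x ∈ ({-1, 0, 1} : Set R) := by
  have := Tmul (show (-1 : R) ∈ ({-1, 0, 1} : Set R) from Set.mem_insert _ _) h
  rwa [neg_one_mul] at this

private lemma Tpm {x : ℚ} (hx : x ∈ ({-1, 0, 1} : Set ℚ)) (h0 : x ≠ 0) :
    x = 1 ∨ x = -1 := by
  simp only [Set.mem_insert_iff, Set.mem_singleton_iff] at hx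
  rcases hx with rfl | rfl | rfl <;> tauto

private lemma consInj {k j : ℕ} (s₀ : Fin (k + 1)) (f : Fin j → Fin k)
    (hf : Function.Injective f) :
    Function.Injective
      (Fin.cons s₀ (fun i => s₀.succAbove (f i)) : Fin (j + 1) → Fin (k + 1)) := by
  intro a b hab
  cases a using Fin.cases with
  | zero =>
    cases b using Fin.cases with
    | zero => rfl
    | succ i =>
      rw [Fin.cons_zero, Fin.cons_succ] at hab
      exact absurd hab.symm (Fin.succAbove_ne _ _)
  | succ i =>
    cases b using Fin.cases with
    | zero =>
      rw [Fin.cons_succ, Fin.cons_zero] at hab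
      exact absurd hab (Fin.succAbove_ne _ _)
    | succ i' =>
      rw [Fin.cons_succ, Fin.cons_succ] at hab
      exact congrArg Fin.succ (hf (Fin.succAbove_right_injective hab))

private lemma case2a {u v : ℚ} (hu : u ∈ ({-1, 0, 1} : Set ℚ)) (hv : v ∈ ({-1, 0, 1} : Set ℚ))
    (h : u - v ∉ ({-1, 0, 1} : Set ℚ)) : (u = 1 ∧ v = -1) ∨ (u = -1 ∧ v = 1) := by
  simp only [Set.mem_insert_iff, Set.mem_singleton_iff] at hu hv
  rcases hu with rfl | rfl | rfl <;> rcases hv with rfl | rfl | rfl <;>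
    first
      | (left; norm_num; done)
      | (right; norm_num; done)
      | (exfalso; apply h; norm_num [Set.mem_insert_iff, Set.mem_singleton_iff])

private lemma case2b {u v : ℚ} (hu : u ∈ ({-1, 0, 1} : Set ℚ)) (hv : v ∈ ({-1, 0, 1} : Set ℚ))
    (h : u * v = -1) : (u = 1 ∧ v = -1) ∨ (u = -1 ∧ v = 1) := by
  simp only [Set.mem_insert_iff, Set.mem_singleton_iff] at hu hv
  rcases hu with rfl | rfl | rfl <;> rcases hv with rfl | rfl | rfl <;> revert h <;> norm_num

private def Concl (n : ℕ) (S : Finset (Fin n → ℤ)) : Prop :=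
  ∃ s : Fin n → (Fin n → ℤ),
      (∀ j, s j ∈ S ∪ Finset.univ.image (fun i : Fin n => (Pi.single i 1 : Fin n → ℤ))) ∧
      Function.Injective s ∧
      (Matrix.of fun i j => ((s j i : ℚ))).det ≠ 0 ∧
      ∃ d d' : Fin n → ℤ,
        d ∈ S ∧ d' ∈ S ∧ d ∉ Set.range s ∧ d' ∉ Set.range s ∧
        ∃ k ℓ : Fin n,
          ((Matrix.of fun i j => ((s j i : ℚ)))⁻¹.mulVec (fun i => (d i : ℚ))) k *
            ((Matrix.of fun i j => ((s j i : ℚ)))⁻¹.mulVec (fun i => (d i : ℚ))) ℓ > 0 ∧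
          ((Matrix.of fun i j => ((s j i : ℚ)))⁻¹.mulVec (fun i => (d' i : ℚ))) k *
            ((Matrix.of fun i j => ((s j i : ℚ)))⁻¹.mulVec (fun i => (d' i : ℚ))) ℓ < 0

private lemma aux (n : ℕ) (S : Finset (Fin n → ℤ)) :
    ∀ (k : ℕ), 2 ≤ k →
    ∀ (G : Fin n → (Fin n → ℤ)) (A : Matrix (Fin n) (Fin n) ℚ),
    A = (Matrix.of fun i j => ((G j i : ℚ))) →
    (∀ j, G j ∈ S ∪ Finset.univ.image (fun i : Fin n => (Pi.single i 1 : Fin n → ℤ))) →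
    Function.Injective G → A.det ≠ 0 →
    ∀ (d : Fin k → (Fin n → ℤ)) (r : Fin k → Fin n) (M : Matrix (Fin k) (Fin k) ℚ),
    (∀ s t, M s t = A⁻¹.mulVec (fun i => ((d t i : ℚ))) (r s)) →
    (∀ t, d t ∈ S) → Function.Injective d → (∀ t, d t ∉ Set.range G) →
    Function.Injective r →
    M.det ∉ ({-1, 0, 1} : Set ℚ) →
    (∀ (j : ℕ), j < k → ∀ (σ τ : Fin j → Fin k),
        Function.Injective σ → Function.Injective τ →
        (M.submatrix σ τ).det ∈ ({-1, 0, 1} : Set ℚ)) →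
    Concl n S := by
  intro k
  induction k using Nat.strong_induction_on with
  | _ k IH =>
  intro hk G A hAdef hGmem hGinj hGdet d r M hMdef hdS hdinj hdG hrinj hMdet hMsub
  have hAu : IsUnit A.det := isUnit_iff_ne_zero.mpr hGdet
  have hent : ∀ s t, M s t ∈ ({-1, 0, 1} : Set ℚ) := by
    intro s t
    have h := hMsub 1 (by omega) (fun _ => s) (fun _ => t)
      (Function.injective_of_subsingleton _) (Function.injective_of_subsingleton _)
    rwa [Matrix.det_fin_one] at h
  obtain ⟨m, rfl⟩ : ∃ m, k = m + 2 := ⟨k - 2, by omega⟩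
  by_cases hm : m = 0
  · -- base case k = 2
    subst hm
    clear IH hMsub
    have hdet2 : M.det = M 0 0 * M 1 1 - M 0 1 * M 1 0 := Matrix.det_fin_two M
    have hx : M 0 0 * M 1 1 ∈ ({-1, 0, 1} : Set ℚ) := Tmul (hent 0 0) (hent 1 1)
    have hy : M 0 1 * M 1 0 ∈ ({-1, 0, 1} : Set ℚ) := Tmul (hent 0 1) (hent 1 0)
    have hd2 := hMdet
    rw [hdet2] at hd2
    have hxy : (M 0 0 * M 1 1 = 1 ∧ M 0 1 * M 1 0 = -1) ∨
        (M 0 0 * M 1 1 = -1 ∧ M 0 1 * M 1 0 = 1) := case2a hx hy hd2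
    have hP : (M 0 0 * M 1 0) * (M 0 1 * M 1 1) = -1 := by
      have hre : (M 0 0 * M 1 0) * (M 0 1 * M 1 1)
          = (M 0 0 * M 1 1) * (M 0 1 * M 1 0) := by ring
      rw [hre]
      rcases hxy with ⟨h1, h2⟩ | ⟨h1, h2⟩ <;> rw [h1, h2] <;> norm_num
    have hPm1 : M 0 0 * M 1 0 ∈ ({-1, 0, 1} : Set ℚ) := Tmul (hent 0 0) (hent 1 0)
    have hPm2 : M 0 1 * M 1 1 ∈ ({-1, 0, 1} : Set ℚ) := Tmul (hent 0 1) (hent 1 1)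
    have hsplit : (M 0 0 * M 1 0 = 1 ∧ M 0 1 * M 1 1 = -1) ∨
        (M 0 0 * M 1 0 = -1 ∧ M 0 1 * M 1 1 = 1) := case2b hPm1 hPm2 hP
    refine ⟨G, hGmem, hGinj, by rw [← hAdef]; exact hGdet, ?_⟩
    have key : ∀ t s, ((Matrix.of fun i j => ((G j i : ℚ)))⁻¹.mulVec
        (fun i => (d t i : ℚ))) (r s) = M s t := by
      intro t s
      rw [hMdef, hAdef]
    rcases hsplit with ⟨h1, h2⟩ | ⟨h1, h2⟩
    · refine ⟨d 0, d 1, hdS 0, hdS 1, hdG 0, hdG 1, r 0, r 1, ?_, ?_⟩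
      · rw [key 0 0, key 0 1, h1]; norm_num
      · rw [key 1 0, key 1 1, h2]; norm_num
    · refine ⟨d 1, d 0, hdS 1, hdS 0, hdG 1, hdG 0, r 0, r 1, ?_, ?_⟩
      · rw [key 1 0, key 1 1, h2]; norm_num
      · rw [key 0 0, key 0 1, h1]; norm_num
  · -- inductive step
    have hex : ∃ s₁ t₁, M s₁ t₁ ≠ 0 := by
      by_contra hno
      push_neg at hno
      apply hMdet
      rw [Matrix.det_eq_zero_of_row_eq_zero 0 (fun j => hno 0 j)]
      exact Set.mem_insert_of_mem _ (Set.mem_insert _ _)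
    obtain ⟨sb, tb, hp⟩ := hex
    have hpT : M sb tb ∈ ({-1, 0, 1} : Set ℚ) := hent sb tb
    have hppm : M sb tb = 1 ∨ M sb tb = -1 := Tpm hpT hp
    set y : Fin (m + 2) → Fin n → ℚ := fun t => A⁻¹.mulVec (fun i => ((d t i : ℚ)))
      with hydef
    have hMy : ∀ s t, M s t = y t (r s) := by
      intro s t; rw [hMdef, hydef]
    have hAy : ∀ t, A.mulVec (y t) = (fun i => ((d t i : ℚ))) := by
      intro t
      rw [hydef, Matrix.mulVec_mulVec, Matrix.mul_nonsing_inv _ hAu, Matrix.one_mulVec]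
    set G' : Fin n → (Fin n → ℤ) := Function.update G (r sb) (d tb) with hG'def
    set A' : Matrix (Fin n) (Fin n) ℚ :=
      A.updateCol (r sb) (fun i => ((d tb i : ℚ))) with hA'def
    have hA'G : A' = (Matrix.of fun i j => ((G' j i : ℚ))) := by
      rw [hA'def, hAdef, hG'def]
      ext i j
      by_cases hj : j = r sb <;>
        simp [Matrix.updateCol_apply, Function.update_apply, hj]
    have hG'mem : ∀ j, G' j ∈
        S ∪ Finset.univ.image (fun i : Fin n => (Pi.single i 1 : Fin n → ℤ)) := by
      intro j
      rw [hG'def, Function.update_apply]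
      split_ifs with hj
      · exact Finset.mem_union_left _ (hdS tb)
      · exact hGmem j
    have hG'inj : Function.Injective G' := by
      intro a b hab
      rw [hG'def] at hab
      rcases eq_or_ne a (r sb) with ha | ha <;> rcases eq_or_ne b (r sb) with hb | hb
      · rw [ha, hb]
      · rw [ha, Function.update_self, Function.update_of_ne hb] at hab
        exact absurd ⟨b, hab.symm⟩ (hdG tb)
      · rw [hb, Function.update_self, Function.update_of_ne ha] at hab
        exact absurd ⟨a, hab⟩ (hdG tb)
      · rw [Function.update_of_ne ha, Function.update_of_ne hb] at hab
        exact hGinj hab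
    have hdet' : A'.det = A.det * M sb tb := by
      have h1 : A'.det = Matrix.cramer A (fun i => ((d tb i : ℚ))) (r sb) := by
        rw [hA'def, Matrix.cramer_apply]
      rw [h1, Matrix.cramer_eq_adjugate_mulVec, ← hAy tb, Matrix.mulVec_mulVec,
        Matrix.adjugate_mul, Matrix.smul_mulVec, Matrix.one_mulVec, hMy]
      simp [Pi.smul_apply, smul_eq_mul]
    have hA'det0 : A'.det ≠ 0 := by
      rw [hdet']; exact mul_ne_zero hGdet hp
    have hA'u : IsUnit A'.det := isUnit_iff_ne_zero.mpr hA'det0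
    set z : Fin (m + 2) → Fin n → ℚ := fun u i =>
      if i = r sb then y u (r sb) / M sb tb
      else y u i - y u (r sb) / M sb tb * y tb i with hzdef
    have hysb : y tb (r sb) = M sb tb := (hMy sb tb).symm
    have hzsplit : ∀ u, z u = (fun i => y u i - y u (r sb) / M sb tb * y tb i)
        + (y u (r sb) / M sb tb) • (Pi.single (r sb) (1 : ℚ) : Fin n → ℚ) := by
      intro u; funext i
      rw [hzdef]
      by_cases hi : i = r sb
      · subst hi
        simp only [if_pos rfl, ite_true, Pi.add_apply, Pi.smul_apply, Pi.single_eq_same,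
          smul_eq_mul, mul_one]
        rw [hysb]
        field_simp
        ring
      · simp only [if_neg hi, Pi.add_apply, Pi.smul_apply, Pi.single_eq_of_ne hi,
          smul_eq_mul, mul_zero, add_zero]
    have hvanish : ∀ (w : Fin n → ℚ), w (r sb) = 0 → A'.mulVec w = A.mulVec w := by
      intro w hw; funext i
      rw [hA'def]
      simp only [Matrix.mulVec, dotProduct]
      refine Finset.sum_congr rfl (fun j _ => ?_)
      by_cases hj : j = r sb
      · subst hj; rw [hw, Matrix.updateCol_apply, if_pos rfl]; ring
      · rw [Matrix.updateCol_apply, if_neg hj]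
    have hzmul : ∀ u, A'.mulVec (z u) = (fun i => ((d u i : ℚ))) := by
      intro u
      have hsub : (fun i => y u i - y u (r sb) / M sb tb * y tb i)
          = y u - (y u (r sb) / M sb tb) • y tb := by
        funext i; simp [Pi.sub_apply, Pi.smul_apply, smul_eq_mul]
      have hw0 : (fun i => y u i - y u (r sb) / M sb tb * y tb i) (r sb) = 0 := by
        simp only []
        rw [hysb, div_mul_cancel₀ _ hp, sub_self]
      rw [hzsplit u, Matrix.mulVec_add, Matrix.mulVec_smul,
        hvanish _ hw0, hsub, Matrix.mulVec_sub, Matrix.mulVec_smul, hAy u, hAy tb,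
        Matrix.mulVec_single_one]
      funext i
      have hcol : A' i (r sb) = ((d tb i : ℚ)) := by
        rw [hA'def, Matrix.updateCol_apply, if_pos rfl]
      simp only [Pi.add_apply, Pi.sub_apply, Pi.smul_apply, smul_eq_mul, Matrix.col, Matrix.transpose_apply, hcol]
      ring
    have hinv' : ∀ u, A'⁻¹.mulVec (fun i => ((d u i : ℚ))) = z u := by
      intro u
      rw [← hzmul u, Matrix.mulVec_mulVec, Matrix.nonsing_inv_mul _ hA'u,
        Matrix.one_mulVec]
    set M' : Matrix (Fin (m + 1)) (Fin (m + 1)) ℚ :=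
      Matrix.of (fun s t => z (tb.succAbove t) (r (sb.succAbove s))) with hM'def0
    have hM'def : ∀ s t, M' s t
        = A'⁻¹.mulVec (fun i => ((d (tb.succAbove t) i : ℚ))) (r (sb.succAbove s)) := by
      intro s t
      rw [hinv', hM'def0]
      rfl
    have hM'entry : ∀ s t, M' s t = M (sb.succAbove s) (tb.succAbove t)
        - M sb (tb.succAbove t) / M sb tb * M (sb.succAbove s) tb := by
      intro s t
      have hne : r (sb.succAbove s) ≠ r sb := fun h => Fin.succAbove_ne sb s (hrinj h)
      rw [hM'def0]
      simp only [Matrix.of_apply, hzdef]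
      rw [if_neg hne, ← hMy, ← hMy, ← hMy]
    set πr : Fin (m + 2) ≃ Fin (m + 2) :=
      (finSuccEquiv (m + 1)).trans (finSuccEquiv' sb).symm with hπr
    set πc : Fin (m + 2) ≃ Fin (m + 2) :=
      (finSuccEquiv (m + 1)).trans (finSuccEquiv' tb).symm with hπc
    have hπr0 : πr 0 = sb := by
      rw [hπr]; simp [Equiv.trans_apply]
    have hπrs : ∀ i : Fin (m + 1), πr i.succ = sb.succAbove i := by
      intro i; rw [hπr]; simp [Equiv.trans_apply]
    have hπc0 : πc 0 = tb := by
      rw [hπc]; simp [Equiv.trans_apply]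
    have hπcs : ∀ i : Fin (m + 1), πc i.succ = tb.succAbove i := by
      intro i; rw [hπc]; simp [Equiv.trans_apply]
    set N : Matrix (Fin (m + 2)) (Fin (m + 2)) ℚ := M.submatrix πr πc with hN
    have hNdetsign : ∃ ε : ℚ, (ε = 1 ∨ ε = -1) ∧ N.det = ε * M.det := by
      refine ⟨((Equiv.Perm.sign (πr.trans πc.symm) : ℤ) : ℚ), ?_, ?_⟩
      · rcases Int.units_eq_one_or (Equiv.Perm.sign (πr.trans πc.symm)) with h | h <;>
          rw [h] <;> norm_num
      · have h1 : N = (M.submatrix πc πc).submatrix (πr.trans πc.symm) id := by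
          ext s t
          rw [hN]
          simp [Matrix.submatrix_apply, Equiv.trans_apply, Equiv.apply_symm_apply]
        rw [h1, Matrix.det_permute, Matrix.det_submatrix_equiv_self]
    obtain ⟨ε, hε, hNdet⟩ := hNdetsign
    have hN00 : N 0 0 = M sb tb := by
      rw [hN]; simp [Matrix.submatrix_apply, hπr0, hπc0]
    have hNpivot := pivot_det (j := m + 1) N (by rw [hN00]; exact hp)
    have hNM' : (Matrix.of fun s t : Fin (m + 1) =>
        N s.succ t.succ - N 0 t.succ / N 0 0 * N s.succ 0) = M' := by
      ext s t
      simp only [Matrix.of_apply, hN, Matrix.submatrix_apply, hπr0, hπc0, hπrs, hπcs]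
      rw [hM'entry]
    have hNdet2 : N.det = M sb tb * M'.det := by rw [hNpivot, hNM', hN00]
    have hM'not : M'.det ∉ ({-1, 0, 1} : Set ℚ) := by
      intro hmem
      apply hMdet
      have h2 : ε * M.det = M sb tb * M'.det := by rw [← hNdet, hNdet2]
      rcases hε with rfl | rfl
      · rw [show M.det = M sb tb * M'.det by linarith]
        exact Tmul hpT hmem
      · rw [show M.det = -(M sb tb * M'.det) by linarith]
        exact Tneg' (Tmul hpT hmem)
    have hM'sub : ∀ j, j < m + 1 → ∀ (σ τ : Fin j → Fin (m + 1)),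
        Function.Injective σ → Function.Injective τ →
        ((M'.submatrix σ τ).det ∈ ({-1, 0, 1} : Set ℚ)) := by
      intro j hj σ τ hσ hτ
      set N₂ : Matrix (Fin (j + 1)) (Fin (j + 1)) ℚ :=
        M.submatrix (Fin.cons sb (fun i => sb.succAbove (σ i)))
          (Fin.cons tb (fun i => tb.succAbove (τ i))) with hN₂
      have h00 : N₂ 0 0 = M sb tb := by rw [hN₂]; simp
      have hpd := pivot_det N₂ (by rw [h00]; exact hp)
      have hmat : (Matrix.of fun s t : Fin j =>
          N₂ s.succ t.succ - N₂ 0 t.succ / N₂ 0 0 * N₂ s.succ 0) = M'.submatrix σ τ := by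
        ext s t
        simp only [Matrix.of_apply, hN₂, Matrix.submatrix_apply, Fin.cons_zero, Fin.cons_succ]
        rw [hM'entry]
      have hN₂T : N₂.det ∈ ({-1, 0, 1} : Set ℚ) := by
        rw [hN₂]
        exact hMsub (j + 1) (by omega) _ _ (consInj sb σ hσ) (consInj tb τ hτ)
      rw [hpd, hmat, h00] at hN₂T
      rcases hppm with h1 | h1
      · rwa [h1, one_mul] at hN₂T
      · rw [h1, neg_one_mul] at hN₂T
        exact Tneg hN₂T
    have hd'S : ∀ t : Fin (m + 1), d (tb.succAbove t) ∈ S := fun t => hdS _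
    have hd'inj : Function.Injective (fun t : Fin (m + 1) => d (tb.succAbove t)) :=
      fun a b hab => Fin.succAbove_right_injective (hdinj hab)
    have hd'G : ∀ t : Fin (m + 1), d (tb.succAbove t) ∉ Set.range G' := by
      rintro t ⟨j, hj⟩
      rw [hG'def, Function.update_apply] at hj
      by_cases hjr : j = r sb
      · rw [if_pos hjr] at hj
        exact Fin.succAbove_ne tb t (hdinj hj).symm
      · rw [if_neg hjr] at hj
        exact hdG (tb.succAbove t) ⟨j, hj⟩
    have hr'inj : Function.Injective (fun s : Fin (m + 1) => r (sb.succAbove s)) :=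
      fun a b hab => Fin.succAbove_right_injective (hrinj hab)
    exact IH (m + 1) (by omega) (by omega) G' A' hA'G hG'mem hG'inj hA'det0
      _ _ M' hM'def hd'S hd'inj hd'G hr'inj hM'not hM'sub


private lemma TcastQ {x : ℤ} (h : ((x : ℚ)) ∈ ({-1, 0, 1} : Set ℚ)) :
    x ∈ ({-1, 0, 1} : Set ℤ) := by
  simp only [Set.mem_insert_iff, Set.mem_singleton_iff] at h ⊢
  exact_mod_cast h

private lemma TcastQ' {x : ℤ} (h : x ∈ ({-1, 0, 1} : Set ℤ)) :
    ((x : ℚ)) ∈ ({-1, 0, 1} : Set ℚ) := by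
  simp only [Set.mem_insert_iff, Set.mem_singleton_iff] at h ⊢
  exact_mod_cast h

private lemma detcast {k : ℕ} (B : Matrix (Fin k) (Fin k) ℤ) :
    (Matrix.of fun s t => ((B s t : ℤ) : ℚ)).det = ((B.det : ℤ) : ℚ) := by
  have h := RingHom.map_det (Int.castRingHom ℚ) B
  rw [show (Matrix.of fun s t => ((B s t : ℤ) : ℚ))
      = (Int.castRingHom ℚ).mapMatrix B from rfl, ← h]
  rfl

private lemma top (n : ℕ) (S : Finset (Fin n → ℤ))
    (hS01 : ∀ v ∈ S, ∀ i, v i ∈ ({-1, 0, 1} : Set ℤ)) :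
    ∀ (k : ℕ) (c : Fin k → (Fin n → ℤ)) (r : Fin k → Fin n),
      Function.Injective c → (∀ j, c j ∈ S) → Function.Injective r →
      (Matrix.of fun i j => c j (r i)).det ∉ ({-1, 0, 1} : Set ℤ) → Concl n S := by
  intro k
  induction k using Nat.strong_induction_on with
  | _ k IH =>
  intro c r hcinj hcS hrinj hdet
  by_cases hall : ∀ j, j < k → ∀ (σ τ : Fin j → Fin k), Function.Injective σ →
      Function.Injective τ →
      ((Matrix.of fun i j => c j (r i)).submatrix σ τ).det ∈ ({-1, 0, 1} : Set ℤ)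
  swap
  · push_neg at hall
    obtain ⟨j, hj, σ, τ, hσ, hτ, hbad⟩ := hall
    exact IH j hj (fun t => c (τ t)) (fun s => r (σ s)) (fun a b hab => hτ (hcinj hab))
      (fun t => hcS _) (fun a b hab => hσ (hrinj hab)) hbad
  have hk2 : 2 ≤ k := by
    by_contra hlt
    push_neg at hlt
    interval_cases k
    · exact hdet (by rw [Matrix.det_fin_zero]; simp)
    · refine hdet ?_
      rw [Matrix.det_fin_one]
      exact hS01 _ (hcS 0) _
  obtain ⟨m, rfl⟩ : ∃ m, k = m + 2 := ⟨k - 2, by omega⟩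
  set Mz : Matrix (Fin (m + 2)) (Fin (m + 2)) ℤ := Matrix.of (fun i j => c j (r i)) with hMz
  have hunit : ∀ t i, c t ≠ Pi.single i 1 := by
    intro t i heq
    by_cases hir : ∃ s₀, r s₀ = i
    · obtain ⟨s₀, rfl⟩ := hir
      have hcol : ∀ s, Mz s t = if s = s₀ then 1 else 0 := by
        intro s
        rw [hMz]
        simp only [Matrix.of_apply, heq, Pi.single_apply]
        by_cases hs : s = s₀
        · simp [hs]
        · have hne : r s ≠ r s₀ := fun h => hs (hrinj h)
          simp [hs, hne]
      apply hdet
      rw [Matrix.det_succ_column Mz t, Finset.sum_eq_single s₀]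
      · rw [hcol s₀, if_pos rfl, mul_one]
        have hsubT : (Mz.submatrix s₀.succAbove t.succAbove).det ∈ ({-1, 0, 1} : Set ℤ) :=
          hall (m + 1) (by omega) _ _ Fin.succAbove_right_injective
            Fin.succAbove_right_injective
        rcases Nat.even_or_odd ((s₀ : ℕ) + (t : ℕ)) with he | ho
        · rw [he.neg_one_pow, one_mul]
          exact hsubT
        · rw [ho.neg_one_pow, neg_one_mul]
          exact Tneg' hsubT
      · intro b _ hb
        rw [hcol b, if_neg hb]
        ring
      · intro hmem
        exact absurd (Finset.mem_univ _) hmem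
    · push_neg at hir
      apply hdet
      rw [Matrix.det_eq_zero_of_column_eq_zero t]
      · exact Set.mem_insert_of_mem _ (Set.mem_insert _ _)
      · intro s
        rw [hMz]
        simp only [Matrix.of_apply, heq, Pi.single_apply]
        simp [hir s]
  have hdetQ : (Matrix.of fun s t : Fin (m + 2) => ((c t (r s) : ℚ))).det
      = ((Mz.det : ℤ) : ℚ) := detcast Mz
  refine aux n S (m + 2) (by omega) (fun i => (Pi.single i 1 : Fin n → ℤ)) 1 ?_ ?_ ?_ ?_
    c r (Matrix.of fun s t => ((c t (r s) : ℚ))) ?_ hcS hcinj ?_ hrinj ?_ ?_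
  · ext i j
    simp [Matrix.one_apply, Pi.single_apply, apply_ite]
  · intro j
    exact Finset.mem_union_right _ (Finset.mem_image.mpr ⟨j, Finset.mem_univ j, rfl⟩)
  · intro a b hab
    by_cases hab' : a = b
    · exact hab'
    · exfalso
      have h1 := congrFun hab a
      simp [Pi.single_apply, hab'] at h1
  · simp
  · intro s t
    rw [inv_one, Matrix.one_mulVec]
    rfl
  · rintro t ⟨i, hi⟩
    exact hunit t i hi.symm
  · rw [hdetQ]
    intro hmem
    exact hdet (TcastQ hmem)
  · intro j hj σ τ hσ hτ
    have h2 : ((Matrix.of fun s t : Fin (m + 2) => ((c t (r s) : ℚ))).submatrix σ τ).det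
        = (((Mz.submatrix σ τ).det : ℤ) : ℚ) := detcast (Mz.submatrix σ τ)
    rw [h2]
    exact TcastQ' (hall j (by omega) σ τ hσ hτ)



/-- A finite set of integer vectors is totally unimodular if every square submatrix of the
matrix whose columns are the elements of the set has determinant 0 or ±1. -/
def IsTUSet (n : ℕ) (S : Finset (Fin n → ℤ)) : Prop :=
  ∀ (k : ℕ) (c : Fin k → (Fin n → ℤ)) (r : Fin k → Fin n),
    Function.Injective c → (∀ j, c j ∈ S) → Function.Injective r →
    (Matrix.of fun i j => c j (r i)).det ∈ ({-1, 0, 1} : Set ℤ)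

/-- If S ⊆ {−1,0,1}^I is not totally unimodular, then there is a basis drawn from
S ∪ {eᵢ} and vectors d, d' ∈ S outside the basis exposing opposite sign patterns
in the coordinates with respect to that basis. -/
theorem nonunimodular_gives_inconsistency (n : ℕ) (S : Finset (Fin n → ℤ))
    (hS01 : ∀ v ∈ S, ∀ i, v i ∈ ({-1, 0, 1} : Set ℤ))
    (hnTU : ¬ IsTUSet n S) :
    ∃ s : Fin n → (Fin n → ℤ),
      (∀ j, s j ∈ S ∪ Finset.univ.image (fun i : Fin n => (Pi.single i 1 : Fin n → ℤ))) ∧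
      Function.Injective s ∧
      (Matrix.of fun i j => ((s j i : ℚ))).det ≠ 0 ∧
      ∃ d d' : Fin n → ℤ,
        d ∈ S ∧ d' ∈ S ∧ d ∉ Set.range s ∧ d' ∉ Set.range s ∧
        ∃ k ℓ : Fin n,
          ((Matrix.of fun i j => ((s j i : ℚ)))⁻¹.mulVec (fun i => (d i : ℚ))) k *
            ((Matrix.of fun i j => ((s j i : ℚ)))⁻¹.mulVec (fun i => (d i : ℚ))) ℓ > 0 ∧
          ((Matrix.of fun i j => ((s j i : ℚ)))⁻¹.mulVec (fun i => (d' i : ℚ))) k *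
            ((Matrix.of fun i j => ((s j i : ℚ)))⁻¹.mulVec (fun i => (d' i : ℚ))) ℓ < 0 := by
  unfold IsTUSet at hnTU
  push_neg at hnTU
  obtain ⟨k, c, r, hcinj, hcS, hrinj, hdet⟩ := hnTU
  exact top n S hS01 k c r hcinj hcS hrinj hdet
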